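/- Let X be a smooth complete toric variety under a torus G, D a set of boundary divisors, and A the Levi subgroup of Aut°(X, D) with root system Φ(X, D). Then X as a spherical A-variety is horospherical, i.e. its set of spherical roots Σ_A(X) is empty; equivalently, its valuation cone V_A(X) is all of N_A(X). -/

import Mathlib

/-- Corollary 8.10: Let `X` be a smooth complete toric variety
under a torus `G`, `D` a set of boundary divisors, `A` the Levi subgroup of
`Aut°(X, D)` with simple roots `Ψ`.  Abstract data: `F` is the (complete) fan
of `X` in `N`; `ΛA = Λ_A(X)` with restriction map
`res : N → N_A(X) = Hom(Λ_A(X), ℚ)`, which restricts to an isomorphism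
`Ψ^⊥ ≅ N_A(X)` (Proposition 8.6(d), hypothesis `hbij`); by Theorem 8.7 the
valuation cone `V_A(X)` equals the image under `res` of the support of the
colored fan `{c ∩ Ψ^⊥ | c ∈ F}` (hypothesis `hsupp`); `Σ_A(X)` is the set of
spherical roots, so `V_A(X) = {w | ⟨w, σ⟩ ≤ 0 ∀ σ ∈ Σ_A(X)}` and `0 ∉ Σ_A(X)`.
Then `X` is horospherical as an `A`-variety: `Σ_A(X) = ∅`, equivalently
`V_A(X)` is all of `N_A(X)`. -/
theorem stmt_15 {N : Type*} [AddCommGroup N] [Module ℚ N]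
    [FiniteDimensional ℚ N]
    (F : Set (Set N))
    (hconv : ∀ c ∈ F, (0 : N) ∈ c ∧ (∀ x ∈ c, ∀ y ∈ c, x + y ∈ c) ∧
      ∀ t : ℚ, 0 ≤ t → ∀ x ∈ c, t • x ∈ c)
    (hcomplete : ⋃ c ∈ F, c = Set.univ)
    (Ψ : Finset (Module.Dual ℚ N))
    (ΛA : Submodule ℚ (Module.Dual ℚ N))
    (res : N →ₗ[ℚ] Module.Dual ℚ ↥ΛA)
    (hres : res = (ΛA.subtype.dualMap).comp (Module.Dual.eval ℚ N))
    (hbij : Function.Bijective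
      ⇑(res.comp (⨅ α ∈ Ψ, LinearMap.ker (α : N →ₗ[ℚ] ℚ)).subtype))
    (SigA : Finset ↥ΛA) (hSig0 : (0 : ↥ΛA) ∉ SigA)
    (VA : Set (Module.Dual ℚ ↥ΛA))
    (hVA : VA = {w | ∀ s ∈ SigA, w s ≤ 0})
    (hsupp : VA = res '' (⋃ c ∈ F, (c ∩ {x | ∀ α ∈ Ψ, α x = 0}))) :
    SigA = ∅ ∧ VA = Set.univ := by
  set K : Submodule ℚ N := ⨅ α ∈ Ψ, LinearMap.ker (α : N →ₗ[ℚ] ℚ) with hK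
  have hP : (⋃ c ∈ F, (c ∩ {x | ∀ α ∈ Ψ, α x = 0})) = {x : N | ∀ α ∈ Ψ, α x = 0} := by
    ext x
    simp only [Set.mem_iUnion, Set.mem_inter_iff, Set.mem_setOf_eq]
    constructor
    · rintro ⟨c, hc, hx, h⟩; exact h
    · intro h
      have hx : x ∈ ⋃ c ∈ F, c := hcomplete ▸ Set.mem_univ x
      simp only [Set.mem_iUnion] at hx
      obtain ⟨c, hc, hxc⟩ := hx
      exact ⟨c, hc, hxc, h⟩
  have hPset : ({x : N | ∀ α ∈ Ψ, α x = 0}) = (K : Set N) := by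
    ext x
    simp [hK, Submodule.mem_iInf, LinearMap.mem_ker]
  have himg : res '' (K : Set N) = Set.univ := by
    rw [← Subtype.range_coe (s := (K : Set N)), ← Set.range_comp]
    have h := hbij.2.range_eq
    rw [LinearMap.coe_comp, Submodule.coe_subtype] at h
    exact h
  have hVuniv : VA = Set.univ := by
    rw [hsupp, hP, hPset, himg]
  refine ⟨?_, hVuniv⟩
  by_contra h
  obtain ⟨s, hs⟩ := Finset.nonempty_iff_ne_empty.2 h
  have hz : ∀ w : Module.Dual ℚ ↥ΛA, w s ≤ 0 := by
    intro w
    have hw : w ∈ VA := hVuniv ▸ Set.mem_univ w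
    rw [hVA] at hw
    exact hw s hs
  have hz0 : ∀ w : Module.Dual ℚ ↥ΛA, w s = 0 := by
    intro w
    have h1 := hz w
    have h2 := hz (-w)
    simp only [LinearMap.neg_apply, neg_nonpos] at h2
    exact le_antisymm h1 h2
  have hs0 : s = 0 := (Module.forall_dual_apply_eq_zero_iff ℚ s).mp hz0
  exact hSig0 (hs0 ▸ hs)
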